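/- For every z ∈ ℂ, the doubly infinite series ∑_{n=−∞}^{∞} J_n(z) converges and equals 1. -/

import Mathlib

/-- Bessel function of the first kind of nonnegative integer order `n`:
`J_n(z) = ∑_{k=0}^∞ (-1)^k (z/2)^(2k+n) / (k! (k+n)!)`. -/
noncomputable def besselJNat (n : ℕ) (z : ℂ) : ℂ :=
  ∑' k : ℕ, (-1) ^ k * (z / 2) ^ (2 * k + n) / (k.factorial * (k + n).factorial)

/-- Bessel function of the first kind of integer order, with
`J_{-n}(z) = (-1)^n J_n(z)` for `n ≥ 0`. -/
noncomputable def besselJ (n : ℤ) (z : ℂ) : ℂ :=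
  if 0 ≤ n then besselJNat n.toNat z else (-1) ^ (-n).toNat * besselJNat (-n).toNat z

/-- Reindexing `(n, k) ↦ (k, m)` with `n = m - k`. -/
def besselReindex : (Σ _ : ℤ, ℕ) ≃ ℕ × ℕ where
  toFun p := if 0 ≤ p.1 then (p.2, p.2 + p.1.toNat) else (p.2 + (-p.1).toNat, p.2)
  invFun q := ⟨(q.2 : ℤ) - q.1, min q.1 q.2⟩
  left_inv p := by
    obtain ⟨n, k⟩ := p
    by_cases h : 0 ≤ n <;>
      simp only [h, if_true, if_false, Sigma.ext_iff, heq_eq_eq] <;> omega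
  right_inv q := by
    obtain ⟨k, m⟩ := q
    by_cases h : k ≤ m
    · have : (0:ℤ) ≤ (m : ℤ) - k := by omega
      simp only [this, if_true, Prod.mk.injEq]
      omega
    · have : ¬ (0:ℤ) ≤ (m : ℤ) - k := by omega
      simp only [this, if_false, Prod.mk.injEq]
      omega

theorem besselJ_sum_eq_one (z : ℂ) :
    HasSum (fun n : ℤ => besselJ n z) 1 := by
  -- the double series, as a product of two exponential series
  have hg : HasSum (fun k : ℕ => (-z/2) ^ k / k.factorial) (NormedSpace.exp (-z/2)) :=
    NormedSpace.expSeries_div_hasSum_exp (-z/2)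
  have hh : HasSum (fun m : ℕ => (z/2) ^ m / m.factorial) (NormedSpace.exp (z/2)) :=
    NormedSpace.expSeries_div_hasSum_exp (z/2)
  have hgn : Summable fun k : ℕ => ‖(-z/2) ^ k / (k.factorial : ℂ)‖ := by
    simpa [norm_div, norm_pow] using Real.summable_pow_div_factorial ‖-z/2‖
  have hhn : Summable fun m : ℕ => ‖(z/2) ^ m / (m.factorial : ℂ)‖ := by
    simpa [norm_div, norm_pow] using Real.summable_pow_div_factorial ‖z/2‖
  have hFsummable : Summable fun p : ℕ × ℕ =>
      ((-z/2) ^ p.1 / p.1.factorial) * ((z/2) ^ p.2 / p.2.factorial) :=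
    summable_mul_of_summable_norm (f := fun k : ℕ => (-z/2) ^ k / (k.factorial : ℂ))
      (g := fun m : ℕ => (z/2) ^ m / (m.factorial : ℂ)) hgn hhn
  have hmul' := hg.mul hh hFsummable
  have hexp1 : NormedSpace.exp (-z/2) * NormedSpace.exp (z/2) = 1 := by
    rw [← NormedSpace.exp_add_of_commute (Commute.all _ _),
      show (-z/2 + z/2 : ℂ) = 0 by ring, NormedSpace.exp_zero]
  rw [hexp1] at hmul'
  have hFhasSum : HasSum (fun p : ℕ × ℕ =>
      ((-z/2) ^ p.1 / p.1.factorial) * ((z/2) ^ p.2 / p.2.factorial)) 1 := hmul'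
  set F : ℕ × ℕ → ℂ := fun p =>
    ((-z/2) ^ p.1 / p.1.factorial) * ((z/2) ^ p.2 / p.2.factorial) with hF
  -- transport along the equivalence
  have hSigma' := besselReindex.hasSum_iff.mpr hFhasSum
  have hSigma : HasSum (fun p : Σ _ : ℤ, ℕ => F (besselReindex p)) 1 := hSigma'
  have hSigmaSum : Summable (fun p : Σ _ : ℤ, ℕ => F (besselReindex p)) := hSigma.summable
  refine hSigma.sigma fun n => ?_
  have hfib : Summable fun k : ℕ => F (besselReindex ⟨n, k⟩) := hSigmaSum.sigma_factor n
  have hts := hfib.hasSum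
  by_cases h : 0 ≤ n
  · set t := n.toNat with ht
    have hfibeq : ∀ k : ℕ, F (besselReindex ⟨n, k⟩) =
        (-1) ^ k * (z / 2) ^ (2 * k + t) / (k.factorial * (k + t).factorial) := by
      intro k
      simp only [besselReindex, h, if_true, Equiv.coe_fn_mk, hF, ← ht]
      have h2 : (2 : ℕ) * k + t = k + (k + t) := by omega
      rw [show (-z/2 : ℂ) = (-1) * (z/2) by ring, mul_pow, h2]
      ring
    rw [besselJ, if_pos h, besselJNat, ← ht]
    rw [funext hfibeq] at hts ⊢
    exact hts
  · set t := (-n).toNat with ht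
    have hfibeq : ∀ k : ℕ, F (besselReindex ⟨n, k⟩) =
        (-1) ^ t * ((-1) ^ k * (z / 2) ^ (2 * k + t) / (k.factorial * (k + t).factorial)) := by
      intro k
      simp only [besselReindex, h, if_false, Equiv.coe_fn_mk, hF, ← ht]
      have h2 : (2 : ℕ) * k + t = (k + t) + k := by omega
      rw [show (-z/2 : ℂ) = (-1) * (z/2) by ring, mul_pow, h2]
      ring
    rw [besselJ, if_neg h, besselJNat, ← ht]
    rw [funext hfibeq] at hts ⊢
    rw [← tsum_mul_left]
    exact hts
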